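/- Let A, B, X ∈ B(H) and φ an Orlicz function. Then φ(w(A*XB)) ≤ (1/2)·w(φ(‖X‖·|A|²) + φ(‖X‖·|B|²)). -/

import Mathlib

/-- An Orlicz function: convex, continuous, non-decreasing on `[0, ∞)`,
vanishing at `0`, positive on `(0, ∞)`, and tending to infinity. -/
def IsOrliczFunction (φ : ℝ → ℝ) : Prop :=
  ConvexOn ℝ (Set.Ici 0) φ ∧ ContinuousOn φ (Set.Ici 0) ∧ MonotoneOn φ (Set.Ici 0) ∧
    φ 0 = 0 ∧ (∀ u : ℝ, 0 < u → 0 < φ u) ∧ Filter.Tendsto φ Filter.atTop Filter.atTop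

/-- The numerical radius of a bounded operator on a complex Hilbert space. -/
noncomputable def numRad {H : Type*} [NormedAddCommGroup H] [InnerProductSpace ℂ H]
    (A : H →L[ℂ] H) : ℝ :=
  ⨆ x : {x : H // ‖x‖ = 1}, ‖(inner ℂ (A x.1) x.1 : ℂ)‖

/-- The modulus `|A| = (A*A)^{1/2}`, via continuous functional calculus. -/
noncomputable def absOp {H : Type*} [NormedAddCommGroup H] [InnerProductSpace ℂ H]
    [CompleteSpace H] (A : H →L[ℂ] H) : H →L[ℂ] H :=
  cfc Real.sqrt (ContinuousLinearMap.adjoint A * A)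


/-- Supporting line for a convex monotone function on `[0,∞)`. -/
lemma exists_affine_le_of_convexOn {φ : ℝ → ℝ} (hc : ConvexOn ℝ (Set.Ici 0) φ)
    (hm : MonotoneOn φ (Set.Ici 0)) (h0 : φ 0 = 0) {t : ℝ} (ht : 0 ≤ t) :
    ∃ a : ℝ, ∀ s, 0 ≤ s → φ t + a * (s - t) ≤ φ s := by
  rcases eq_or_lt_of_le ht with rfl | ht'
  · refine ⟨0, fun s hs => ?_⟩
    have := hm (Set.self_mem_Ici) hs hs
    simpa [h0] using this
  · set Sl : Set ℝ := (fun s => (φ t - φ s) / (t - s)) '' Set.Ico 0 t with hSl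
    have hne : Sl.Nonempty := ⟨_, ⟨0, ⟨le_refl _, ht'⟩, rfl⟩⟩
    have key : ∀ u ∈ Set.Ico 0 t, ∀ v, t < v →
        (φ t - φ u) / (t - u) ≤ (φ v - φ t) / (v - t) := by
      intro u hu v hv
      exact hc.slope_mono_adjacent hu.1 (le_of_lt (ht'.trans hv)) hu.2 hv
    have hbdd : BddAbove Sl := by
      refine ⟨(φ (t+1) - φ t) / (t + 1 - t), ?_⟩
      rintro _ ⟨u, hu, rfl⟩
      exact key u hu (t+1) (by linarith)
    refine ⟨sSup Sl, fun s hs => ?_⟩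
    rcases lt_trichotomy s t with h | rfl | h
    · have h1 : (φ t - φ s) / (t - s) ≤ sSup Sl := le_csSup hbdd ⟨s, ⟨hs, h⟩, rfl⟩
      have h2 : 0 < t - s := by linarith
      nlinarith [(div_le_iff₀ h2).mp h1]
    · simp
    · have h1 : sSup Sl ≤ (φ s - φ t) / (s - t) := csSup_le hne (by
        rintro _ ⟨u, hu, rfl⟩; exact key u hu s h)
      have h2 : 0 < s - t := by linarith
      nlinarith [(le_div_iff₀ h2).mp h1]

lemma re_inner_real_smul_left {H : Type*} [NormedAddCommGroup H] [InnerProductSpace ℂ H]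
    (r : ℝ) (y x : H) :
    RCLike.re (inner ℂ (r • y) x : ℂ) = r * RCLike.re (inner ℂ y x : ℂ) := by
  rw [RCLike.real_smul_eq_coe_smul (K := ℂ), inner_smul_left, RCLike.conj_ofReal,
    RCLike.re_ofReal_mul]

open ContinuousLinearMap in
lemma jensen_state {H : Type*} [NormedAddCommGroup H] [InnerProductSpace ℂ H] [CompleteSpace H]
    {φ : ℝ → ℝ} (hc : ConvexOn ℝ (Set.Ici 0) φ)
    (hct : ContinuousOn φ (Set.Ici 0)) (hm : MonotoneOn φ (Set.Ici 0)) (h0 : φ 0 = 0)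
    (T : H →L[ℂ] H) (hT : 0 ≤ T) (x : H) (hx : ‖x‖ = 1) :
    φ (RCLike.re (inner ℂ (T x) x : ℂ)) ≤ RCLike.re (inner ℂ (cfc φ T x) x : ℂ) := by
  have hTpos : T.IsPositive := (nonneg_iff_isPositive T).mp hT
  have hsa : IsSelfAdjoint T := hTpos.isSelfAdjoint
  have hspec : spectrum ℝ T ⊆ Set.Ici 0 := fun s hs => spectrum_nonneg_of_nonneg hT hs
  set t := RCLike.re (inner ℂ (T x) x : ℂ) with hts
  have ht : 0 ≤ t := hTpos.re_inner_nonneg_left x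
  obtain ⟨a, ha⟩ := exists_affine_le_of_convexOn hc hm h0 ht
  set G : H →L[ℂ] H := algebraMap ℝ _ (φ t - a * t) + a • T with hG
  have haff : cfc (fun s => (φ t - a * t) + a * s) T = G := by
    rw [hG, cfc_add T (fun _ => (φ t - a * t)) (fun s => a * s), cfc_const (φ t - a * t) T,
      cfc_const_mul a (fun s : ℝ => s) T, cfc_id' ℝ T]
  have hle : G ≤ cfc φ T := by
    rw [← haff]
    apply cfc_mono
    · intro s hs
      have := ha s (hspec hs)
      linarith
    · exact (continuous_const.add (continuous_const.mul continuous_id)).continuousOn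
    · exact hct.mono hspec
  have hpos := ((le_def _ _).mp hle).re_inner_nonneg_left x
  have hsplit : RCLike.re (inner ℂ ((cfc φ T - G) x) x : ℂ)
      = RCLike.re (inner ℂ (cfc φ T x) x : ℂ) - RCLike.re (inner ℂ (G x) x : ℂ) := by
    rw [sub_apply, inner_sub_left, map_sub]
  have hcomp : RCLike.re (inner ℂ (G x) x : ℂ) = φ t := by
    have hGx : G x = (φ t - a * t) • x + a • T x := by
      rw [hG]
      simp [Algebra.algebraMap_eq_smul_one]
    rw [hGx, inner_add_left, map_add, re_inner_real_smul_left, re_inner_real_smul_left, ← hts]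
    have : RCLike.re (inner ℂ x x : ℂ) = 1 := by
      rw [inner_self_eq_norm_sq, hx]; norm_num
    rw [this]
    ring
  rw [hsplit, hcomp] at hpos
  linarith

open ContinuousLinearMap in
lemma isPositive_norm_smul_adjoint_mul {H : Type*} [NormedAddCommGroup H]
    [InnerProductSpace ℂ H] [CompleteSpace H] (A : H →L[ℂ] H) (c : ℝ) (hc : 0 ≤ c) :
    (0 : H →L[ℂ] H) ≤ c • (ContinuousLinearMap.adjoint A * A) := by
  rw [nonneg_iff_isPositive]
  have hAA : (ContinuousLinearMap.adjoint A * A).IsPositive := by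
    have := isPositive_one.adjoint_conj (𝕜 := ℂ) A
    exact isPositive_adjoint_comp_self A
  refine isPositive_def'.mpr ⟨?_, fun x => ?_⟩
  · have h := hAA.isSelfAdjoint
    rw [isSelfAdjoint_iff] at h ⊢
    rw [star_smul, h]
    simp
  · rw [reApplyInnerSelf_apply, smul_apply, re_inner_real_smul_left]
    exact mul_nonneg hc (hAA.re_inner_nonneg_left x)

lemma numRad_bdd {H : Type*} [NormedAddCommGroup H] [InnerProductSpace ℂ H]
    (T : H →L[ℂ] H) :
    BddAbove (Set.range fun x : {x : H // ‖x‖ = 1} => ‖(inner ℂ (T x.1) x.1 : ℂ)‖) := by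
  refine ⟨‖T‖, ?_⟩
  rintro _ ⟨x, rfl⟩
  calc ‖(inner ℂ (T x.1) x.1 : ℂ)‖ ≤ ‖T x.1‖ * ‖x.1‖ := norm_inner_le_norm _ _
    _ ≤ ‖T‖ * ‖x.1‖ * ‖x.1‖ := by
        gcongr
        exact T.le_opNorm x.1
    _ = ‖T‖ := by rw [x.2]; ring

lemma le_numRad {H : Type*} [NormedAddCommGroup H] [InnerProductSpace ℂ H]
    (T : H →L[ℂ] H) (x : {x : H // ‖x‖ = 1}) :
    ‖(inner ℂ (T x.1) x.1 : ℂ)‖ ≤ numRad T :=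
  le_ciSup (numRad_bdd T) x

variable {H : Type*} [NormedAddCommGroup H] [InnerProductSpace ℂ H] [CompleteSpace H]

theorem stmt15 (A B X : H →L[ℂ] H) (φ : ℝ → ℝ) (hφ : IsOrliczFunction φ) :
    φ (numRad (ContinuousLinearMap.adjoint A * X * B)) ≤
      (1 / 2) * numRad (cfc φ (‖X‖ • (ContinuousLinearMap.adjoint A * A)) +
        cfc φ (‖X‖ • (ContinuousLinearMap.adjoint B * B))) := by
  obtain ⟨hc, hct, hm, h0, -, -⟩ := hφ
  by_cases hne : Nonempty {x : H // ‖x‖ = 1}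
  swap
  · rw [not_nonempty_iff] at hne
    have e1 : numRad (ContinuousLinearMap.adjoint A * X * B) = 0 := Real.iSup_of_isEmpty _
    have e2 : numRad (cfc φ (‖X‖ • (ContinuousLinearMap.adjoint A * A)) +
        cfc φ (‖X‖ • (ContinuousLinearMap.adjoint B * B))) = 0 := Real.iSup_of_isEmpty _
    rw [e1, e2, h0]
    norm_num
  set S₁ := ‖X‖ • (ContinuousLinearMap.adjoint A * A) with hS₁
  set S₂ := ‖X‖ • (ContinuousLinearMap.adjoint B * B) with hS₂
  have hS₁pos : (0:H →L[ℂ] H) ≤ S₁ := isPositive_norm_smul_adjoint_mul A ‖X‖ (norm_nonneg X)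
  have hS₂pos : (0:H →L[ℂ] H) ≤ S₂ := isPositive_norm_smul_adjoint_mul B ‖X‖ (norm_nonneg X)
  set P := cfc φ S₁ + cfc φ S₂ with hP
  set C := (1 / 2) * numRad P with hC
  set f : {x : H // ‖x‖ = 1} → ℝ :=
    fun x => ‖(inner ℂ ((ContinuousLinearMap.adjoint A * X * B) x.1) x.1 : ℂ)‖ with hf
  have hpoint : ∀ x : {x : H // ‖x‖ = 1}, φ (f x) ≤ C := by
    rintro ⟨x, hx⟩
    set t₁ := RCLike.re (inner ℂ (S₁ x) x : ℂ) with ht₁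
    set t₂ := RCLike.re (inner ℂ (S₂ x) x : ℂ) with ht₂
    have ht₁' : t₁ = ‖X‖ * ‖A x‖ ^ 2 := by
      rw [ht₁, hS₁, ContinuousLinearMap.smul_apply, re_inner_real_smul_left,
        ContinuousLinearMap.mul_apply, ContinuousLinearMap.adjoint_inner_left,
        inner_self_eq_norm_sq]
    have ht₂' : t₂ = ‖X‖ * ‖B x‖ ^ 2 := by
      rw [ht₂, hS₂, ContinuousLinearMap.smul_apply, re_inner_real_smul_left,
        ContinuousLinearMap.mul_apply, ContinuousLinearMap.adjoint_inner_left,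
        inner_self_eq_norm_sq]
    have ht₁0 : 0 ≤ t₁ := by rw [ht₁']; positivity
    have ht₂0 : 0 ≤ t₂ := by rw [ht₂']; positivity
    have h1 : (inner ℂ ((ContinuousLinearMap.adjoint A * X * B) x) x : ℂ)
        = inner ℂ (X (B x)) (A x) := by
      rw [ContinuousLinearMap.mul_apply, ContinuousLinearMap.mul_apply,
        ContinuousLinearMap.adjoint_inner_left]
    have h2 : f ⟨x, hx⟩ ≤ (t₁ + t₂) / 2 := by
      rw [hf]
      simp only []
      rw [h1, ht₁', ht₂']
      calc ‖(inner ℂ (X (B x)) (A x) : ℂ)‖ ≤ ‖X (B x)‖ * ‖A x‖ := norm_inner_le_norm _ _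
        _ ≤ (‖X‖ * ‖B x‖) * ‖A x‖ := by
            gcongr
            exact X.le_opNorm (B x)
        _ ≤ (‖X‖ * ‖A x‖ ^ 2 + ‖X‖ * ‖B x‖ ^ 2) / 2 := by
            nlinarith [sq_nonneg (‖A x‖ - ‖B x‖), norm_nonneg X, norm_nonneg (A x),
              norm_nonneg (B x)]
    have hfx0 : 0 ≤ f ⟨x, hx⟩ := norm_nonneg _
    have havg : (0:ℝ) ≤ (t₁ + t₂) / 2 := by linarith
    have h3 : φ (f ⟨x, hx⟩) ≤ φ ((t₁ + t₂) / 2) := hm hfx0 havg h2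
    have h4 : φ ((t₁ + t₂) / 2) ≤ (φ t₁ + φ t₂) / 2 := by
      have := hc.2 ht₁0 ht₂0 (by norm_num : (0:ℝ) ≤ 1/2) (by norm_num : (0:ℝ) ≤ 1/2)
        (by norm_num : (1:ℝ)/2 + 1/2 = 1)
      simp only [smul_eq_mul] at this
      calc φ ((t₁ + t₂) / 2) = φ (1/2 * t₁ + 1/2 * t₂) := by ring_nf
        _ ≤ 1/2 * φ t₁ + 1/2 * φ t₂ := this
        _ = (φ t₁ + φ t₂) / 2 := by ring
    have h5 : φ t₁ ≤ RCLike.re (inner ℂ (cfc φ S₁ x) x : ℂ) :=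
      jensen_state hc hct hm h0 S₁ hS₁pos x hx
    have h6 : φ t₂ ≤ RCLike.re (inner ℂ (cfc φ S₂ x) x : ℂ) :=
      jensen_state hc hct hm h0 S₂ hS₂pos x hx
    have h7 : RCLike.re (inner ℂ (cfc φ S₁ x) x : ℂ) + RCLike.re (inner ℂ (cfc φ S₂ x) x : ℂ)
        = RCLike.re (inner ℂ (P x) x : ℂ) := by
      rw [hP, ContinuousLinearMap.add_apply, inner_add_left, map_add]
    have h8 : RCLike.re (inner ℂ (P x) x : ℂ) ≤ ‖(inner ℂ (P x) x : ℂ)‖ := RCLike.re_le_norm _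
    have h9 : ‖(inner ℂ (P x) x : ℂ)‖ ≤ numRad P := le_numRad P ⟨x, hx⟩
    rw [hC]
    linarith
  -- pass to the supremum
  have hCge : numRad (ContinuousLinearMap.adjoint A * X * B)
      ∈ Set.Ici (0:ℝ) ∩ φ ⁻¹' Set.Iic C := by
    have hD : IsClosed (Set.Ici (0:ℝ) ∩ φ ⁻¹' Set.Iic C) :=
      hct.preimage_isClosed_of_isClosed isClosed_Ici isClosed_Iic
    have hsub : Set.range f ⊆ Set.Ici (0:ℝ) ∩ φ ⁻¹' Set.Iic C := by
      rintro _ ⟨x, rfl⟩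
      exact ⟨norm_nonneg _, hpoint x⟩
    have hmem : sSup (Set.range f) ∈ closure (Set.range f) :=
      csSup_mem_closure (Set.range_nonempty f) (numRad_bdd _)
    have : numRad (ContinuousLinearMap.adjoint A * X * B) = sSup (Set.range f) := rfl
    rw [this]
    exact closure_minimal hsub hD hmem
  exact hCge.2
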